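/- Let P = {p_k : k ≥ 1} be a probability distribution on a countable alphabet, and let δ ∈ (0,1) and c > 0 be constants. Then n^{1−δ} Σ_{k≥1} p_k (1 − p_k)^n → c as n → ∞ if and only if n^{1−δ} Σ_{k≥1} p_k e^{−n p_k} → c as n → ∞. -/
import Mathlib

open Filter Topology

lemma pow_sub_pow_le' (a b : ℝ) (hb : 0 ≤ b) (hba : b ≤ a) :
    ∀ n : ℕ, a ^ (n+1) - b ^ (n+1) ≤ ((n:ℝ)+1) * (a - b) * a ^ n := by
  intro n
  induction n with
  | zero => simp
  | succ m ih =>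
    have ha : 0 ≤ a := hb.trans hba
    have hbn : b ^ (m+1) ≤ a ^ (m+1) := pow_le_pow_left₀ hb hba _
    have key : a ^ (m+1+1) - b ^ (m+1+1) = a * (a^(m+1) - b^(m+1)) + b^(m+1) * (a - b) := by
      ring
    have h1 : a * (a^(m+1) - b^(m+1)) ≤ a * (((m:ℝ)+1)*(a-b)*a^m) :=
      mul_le_mul_of_nonneg_left ih ha
    have e1 : a * (((m:ℝ)+1)*(a-b)*a^m) = ((m:ℝ)+1)*(a-b)*a^(m+1) := by ring
    have h2 : b^(m+1)*(a-b) ≤ a^(m+1)*(a-b) :=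
      mul_le_mul_of_nonneg_right hbn (sub_nonneg.2 hba)
    have e2 : ((m:ℝ)+1+1)*(a-b)*a^(m+1) = ((m:ℝ)+1)*(a-b)*a^(m+1) + a^(m+1)*(a-b) := by ring
    push_cast
    linarith [e1 ▸ h1]

lemma sq_exp_le (x : ℝ) (hx : 0 ≤ x) : x^2 * Real.exp (-x) ≤ 4 := by
  have h1 : 1 + x/2 ≤ Real.exp (x/2) := by linarith [Real.add_one_le_exp (x/2)]
  have h2 : Real.exp x = Real.exp (x/2) ^ 2 := by rw [sq, ← Real.exp_add]; ring_nf
  have hpos : 0 < Real.exp x := Real.exp_pos x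
  rw [Real.exp_neg x, mul_inv_le_iff₀ hpos]
  nlinarith [Real.exp_pos (x/2)]

lemma key_bound (p : ℝ) (hp0 : 0 ≤ p) (hp1 : p ≤ 1) (m : ℕ) (hm : 1 ≤ m) :
    p * (Real.exp (-((m:ℝ)+1) * p) - (1 - p) ^ (m+1)) ≤ 16 * p / ((m:ℝ)+1) := by
  set a := Real.exp (-p) with ha_def
  have hba : 1 - p ≤ a := by linarith [Real.add_one_le_exp (-p)]
  have hb : 0 ≤ 1 - p := by linarith
  have ha : 0 ≤ a := (Real.exp_pos _).le
  have hab : a - (1 - p) ≤ p^2 := by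
    have habs := Real.abs_exp_sub_one_sub_id_le (x := -p)
      (by rwa [abs_neg, abs_of_nonneg hp0])
    have h := (abs_le.1 habs).2
    nlinarith [h]
  have hexp : Real.exp (-((m:ℝ)+1) * p) = a ^ (m+1) := by
    rw [ha_def, ← Real.exp_nat_mul]; congr 1; push_cast; ring
  have ham : a ^ m = Real.exp (-((m:ℝ)) * p) := by
    rw [ha_def, ← Real.exp_nat_mul]; congr 1; ring
  have hpow := pow_sub_pow_le' a (1-p) hb hba m
  have hm' : (1:ℝ) ≤ (m:ℝ) := by exact_mod_cast hm
  have hmpos : (0:ℝ) < (m:ℝ)+1 := by linarith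
  have hsq' : ((m:ℝ)*p)^2 * a^m ≤ 4 := by
    have h := sq_exp_le ((m:ℝ)*p) (by positivity)
    rw [show -((m:ℝ)*p) = -(m:ℝ)*p by ring, ← ham] at h
    exact h
  have hstep : a^(m+1) - (1-p)^(m+1) ≤ ((m:ℝ)+1) * p^2 * a^m := by
    have t1 : ((m:ℝ)+1)*(a-(1-p)) ≤ ((m:ℝ)+1)*p^2 := mul_le_mul_of_nonneg_left hab hmpos.le
    have t2 := mul_le_mul_of_nonneg_right t1 (pow_nonneg ha m)
    linarith
  rw [hexp, le_div_iff₀ hmpos]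
  have hX : p * (a^(m+1) - (1-p)^(m+1)) * ((m:ℝ)+1) ≤ p^3 * a^m * ((m:ℝ)+1)^2 := by
    nlinarith [pow_nonneg ha m, mul_le_mul_of_nonneg_left hstep hp0]
  have h4 : ((m:ℝ)+1)^2 ≤ 4*(m:ℝ)^2 := by nlinarith
  have h5 : p^3 * a^m * ((m:ℝ)+1)^2 ≤ p^3 * a^m * (4*(m:ℝ)^2) :=
    mul_le_mul_of_nonneg_left h4 (by positivity)
  have h6 : p^3 * a^m * (4*(m:ℝ)^2) ≤ 16 * p := by
    nlinarith [mul_le_mul_of_nonneg_left hsq' hp0]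
  linarith

/-- For a distribution `p`, constants `δ ∈ (0,1)` and `c > 0`,
`n^(1−δ) ∑_k p_k (1 − p_k)^n → c` iff `n^(1−δ) ∑_k p_k e^(−n p_k) → c`. -/
theorem stmt5 (p : ℕ → ℝ) (hp : ∀ k, 0 ≤ p k) (hsum : ∑' k, p k = 1)
    (δ : ℝ) (hδ : δ ∈ Set.Ioo (0 : ℝ) 1) (c : ℝ) (hc : 0 < c) :
    Tendsto (fun n : ℕ => (n : ℝ) ^ ((1 : ℝ) - δ) * ∑' k, p k * (1 - p k) ^ n)
        atTop (𝓝 c) ↔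
      Tendsto (fun n : ℕ => (n : ℝ) ^ ((1 : ℝ) - δ) * ∑' k, p k * Real.exp (-(n : ℝ) * p k))
        atTop (𝓝 c) := by
  obtain ⟨hδ0, hδ1⟩ := hδ
  have hsummable : Summable p := by
    by_contra h
    rw [tsum_eq_zero_of_not_summable h] at hsum
    norm_num at hsum
  have hple : ∀ k, p k ≤ 1 := fun k => by
    calc p k ≤ ∑' j, p j := Summable.le_tsum hsummable k (fun j _ => hp j)
    _ = 1 := hsum
  have h1p : ∀ k, 0 ≤ 1 - p k := fun k => by linarith [hple k]
  have sA : ∀ n : ℕ, Summable (fun k => p k * (1 - p k) ^ n) := fun n =>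
    Summable.of_nonneg_of_le (fun k => mul_nonneg (hp k) (pow_nonneg (h1p k) n))
      (fun k =>
        (mul_le_mul_of_nonneg_left (pow_le_one₀ (h1p k) (by linarith [hp k])) (hp k)).trans_eq
          (mul_one _))
      hsummable
  have sB : ∀ n : ℕ, Summable (fun k => p k * Real.exp (-(n:ℝ) * p k)) := fun n =>
    Summable.of_nonneg_of_le (fun k => mul_nonneg (hp k) (Real.exp_pos _).le)
      (fun k => by
        refine (mul_le_mul_of_nonneg_left (Real.exp_le_one_iff.2 ?_) (hp k)).trans_eq (mul_one _)
        have : (0:ℝ) ≤ (n:ℝ) * p k := mul_nonneg n.cast_nonneg (hp k)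
        linarith)
      hsummable
  have termle : ∀ (n : ℕ) (k : ℕ), p k * (1 - p k) ^ n ≤ p k * Real.exp (-(n:ℝ) * p k) :=
    fun n k => by
      refine mul_le_mul_of_nonneg_left ?_ (hp k)
      have h1 : (1 - p k) ^ n ≤ Real.exp (-(p k)) ^ n :=
        pow_le_pow_left₀ (h1p k) (by linarith [Real.add_one_le_exp (-(p k))]) n
      have h2 : Real.exp (-(p k)) ^ n = Real.exp (-(n:ℝ) * p k) := by
        rw [← Real.exp_nat_mul]; congr 1; ring
      rw [← h2]; exact h1
  set A := fun n : ℕ => (n : ℝ) ^ ((1 : ℝ) - δ) * ∑' k, p k * (1 - p k) ^ n with hA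
  set B := fun n : ℕ => (n : ℝ) ^ ((1 : ℝ) - δ) * ∑' k, p k * Real.exp (-(n : ℝ) * p k) with hB
  have hF : Tendsto (fun n : ℕ => B n - A n) atTop (𝓝 0) := by
    apply squeeze_zero' (g := fun n : ℕ => 16 * (n:ℝ)^((1:ℝ)-δ) / n)
    · filter_upwards with n
      have hrp : (0:ℝ) ≤ (n:ℝ)^((1:ℝ)-δ) := Real.rpow_nonneg n.cast_nonneg _
      have := Summable.tsum_le_tsum (termle n) (sA n) (sB n)
      simp only [hA, hB]
      nlinarith [mul_le_mul_of_nonneg_left this hrp]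
    · filter_upwards [eventually_ge_atTop 2] with n hn
      obtain ⟨m, rfl⟩ : ∃ m, n = m + 1 := ⟨n - 1, by omega⟩
      have hm : 1 ≤ m := by omega
      simp only [hA, hB]
      push_cast
      have hmpos : (0:ℝ) < (m:ℝ)+1 := by positivity
      have hrp : (0:ℝ) ≤ ((m:ℝ)+1)^((1:ℝ)-δ) := Real.rpow_nonneg hmpos.le _
      have sB' : Summable (fun k => p k * Real.exp (-((m:ℝ)+1) * p k)) := by
        have h := sB (m+1); push_cast at h; exact h
      have sA' := sA (m+1)
      have hsub := sB'.sub sA'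
      have hterm : ∀ k, p k * Real.exp (-((m:ℝ)+1) * p k) - p k * (1 - p k) ^ (m+1)
          ≤ 16 * p k / ((m:ℝ)+1) := fun k => by
        have h := key_bound (p k) (hp k) (hple k) m hm
        linarith [h, sub_nonneg.2 (mul_le_mul_of_nonneg_left
          (le_refl (Real.exp (-((m:ℝ)+1) * p k))) (hp k)),
          (by ring : p k * (Real.exp (-((m:ℝ)+1) * p k) - (1 - p k) ^ (m+1))
            = p k * Real.exp (-((m:ℝ)+1) * p k) - p k * (1 - p k) ^ (m+1))]
      have he : (fun k => 16 * p k / ((m:ℝ)+1)) = fun k => (16/((m:ℝ)+1)) * p k := by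
        funext k; ring
      have hs16 : Summable (fun k => 16 * p k / ((m:ℝ)+1)) := by
        rw [he]; exact hsummable.mul_left _
      have hbd := Summable.tsum_le_tsum hterm hsub hs16
      have heq : ∑' k, 16 * p k / ((m:ℝ)+1) = 16/((m:ℝ)+1) := by
        rw [he, tsum_mul_left, hsum, mul_one]
      rw [heq, Summable.tsum_sub sB' sA'] at hbd
      have hfin := mul_le_mul_of_nonneg_left hbd hrp
      have he2 : ((m:ℝ)+1)^((1:ℝ)-δ) * (16/((m:ℝ)+1))
          = 16 * ((m:ℝ)+1)^((1:ℝ)-δ) / ((m:ℝ)+1) := by ring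
      linarith [he2 ▸ hfin, (by ring : ((m:ℝ)+1)^((1:ℝ)-δ) *
        ((∑' k, p k * Real.exp (-((m:ℝ)+1) * p k)) - ∑' k, p k * (1 - p k) ^ (m+1))
        = ((m:ℝ)+1)^((1:ℝ)-δ) * (∑' k, p k * Real.exp (-((m:ℝ)+1) * p k))
          - ((m:ℝ)+1)^((1:ℝ)-δ) * ∑' k, p k * (1 - p k) ^ (m+1))]
    · have hlim : Tendsto (fun n : ℕ => 16 * (n:ℝ)^(-δ)) atTop (𝓝 0) := by
        have := ((tendsto_rpow_neg_atTop hδ0).comp (tendsto_natCast_atTop_atTop (R := ℝ))).const_mul (16:ℝ)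
        simpa using this
      refine hlim.congr' ?_
      filter_upwards [eventually_ge_atTop 1] with n hn
      have hpos : (0:ℝ) < (n:ℝ) := by exact_mod_cast Nat.lt_of_lt_of_le Nat.zero_lt_one hn
      rw [show -δ = ((1:ℝ)-δ)-1 by ring, Real.rpow_sub hpos, Real.rpow_one]
      ring
  constructor
  · intro h
    have h2 := h.add hF
    rw [add_zero] at h2
    exact h2.congr (fun n => by ring)
  · intro h
    have h2 := h.sub hF
    rw [sub_zero] at h2
    exact h2.congr (fun n => by ring)
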